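/- Let f be a unimodal Allee map on [0, M_f] with threshold A, carrying capacity K, peak B and maximum M_f = f(B) (i.e., the domain endpoint b equals M_f). If f(M_f) > A, then for every x ∈ (A, M_f] and every n ∈ ℕ, the iterate f^[n](x) satisfies f^[n](x) > A. -/

import Mathlib

open Filter Set

/-- `f` is a unimodal Allee map on `[0, b]` with threshold `A`, carrying capacity `K`
and peak `B` (its maximum is `f B`). -/
def IsUnimodalAlleeMap (b A K B : ℝ) (f : ℝ → ℝ) : Prop :=
  0 < A ∧ A < K ∧ K ≤ b ∧ A < B ∧ B < K ∧
  MapsTo f (Icc 0 b) (Icc 0 b) ∧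
  ContinuousOn f (Icc 0 b) ∧
  StrictMonoOn f (Ioo 0 B) ∧ StrictAntiOn f (Ioo B b) ∧
  f 0 = 0 ∧ f A = A ∧ f K = K ∧
  (∀ x ∈ Ioo 0 A ∪ Ioc K b, f x < x) ∧
  (∀ x ∈ Ioo A K, x < f x)

open Topology in
lemma stmt16_left_le {f : ℝ → ℝ} {a b u : ℝ} (hab : a < b) (hc : ContinuousOn f (Icc a b))
    (hm : StrictMonoOn f (Ioo a b)) (hu : u ∈ Ioo a b) : f a ≤ f u := by
  have ht : Tendsto f (𝓝[>] a) (𝓝 (f a)) := by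
    have h := (hc a (left_mem_Icc.2 hab.le)).mono (Ioc_subset_Icc_self (a := a) (b := b))
    rwa [ContinuousWithinAt, nhdsWithin_Ioc_eq_nhdsGT hab] at h
  refine le_of_tendsto ht ?_
  filter_upwards [Ioo_mem_nhdsGT hu.1] with t ht'
  exact (hm ⟨ht'.1, ht'.2.trans hu.2⟩ hu ht'.2).le

open Topology in
lemma stmt16_le_right {f : ℝ → ℝ} {a b v : ℝ} (hab : a < b) (hc : ContinuousOn f (Icc a b))
    (hm : StrictMonoOn f (Ioo a b)) (hv : v ∈ Ioo a b) : f v ≤ f b := by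
  have ht : Tendsto f (𝓝[<] b) (𝓝 (f b)) := by
    have h := (hc b (right_mem_Icc.2 hab.le)).mono (Ico_subset_Icc_self (a := b) (b := a))
    rwa [ContinuousWithinAt, nhdsWithin_Ico_eq_nhdsLT hab] at h
  refine ge_of_tendsto ht ?_
  filter_upwards [Ioo_mem_nhdsLT hv.2] with t ht'
  exact (hm hv ⟨hv.1.trans ht'.1, ht'.2⟩ ht'.1).le

lemma stmt16_mono_ext {f : ℝ → ℝ} {a b : ℝ} (hab : a < b) (hc : ContinuousOn f (Icc a b))
    (hm : StrictMonoOn f (Ioo a b)) : MonotoneOn f (Icc a b) := by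
  intro x hx y hy hxy
  rcases eq_or_lt_of_le hxy with rfl | hxy
  · exact le_refl _
  obtain ⟨u, hu1, hu2⟩ := exists_between hxy
  obtain ⟨v, hv1, hv2⟩ := exists_between hu2
  have hu : u ∈ Ioo a b := ⟨lt_of_le_of_lt hx.1 hu1, lt_of_lt_of_le (hv1.trans hv2) hy.2⟩
  have hv : v ∈ Ioo a b := ⟨hu.1.trans hv1, lt_of_lt_of_le hv2 hy.2⟩
  have h1 : f x ≤ f u := by
    rcases hx.1.eq_or_lt with rfl | hax
    · exact stmt16_left_le hab hc hm hu
    · exact (hm ⟨hax, hu1.trans hu.2⟩ hu hu1).le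
  have h2 : f v ≤ f y := by
    rcases hy.2.eq_or_lt with rfl | hyb
    · exact stmt16_le_right hab hc hm hv
    · exact (hm hv ⟨hv.1.trans hv2, hyb⟩ hv2).le
  exact h1.trans ((hm hu hv hv1).le.trans h2)

lemma stmt16_anti_ext {f : ℝ → ℝ} {a b : ℝ} (hab : a < b) (hc : ContinuousOn f (Icc a b))
    (hm : StrictAntiOn f (Ioo a b)) : AntitoneOn f (Icc a b) := by
  have h := stmt16_mono_ext (f := fun x => -(f x)) hab hc.neg
    (fun x hx y hy hxy => neg_lt_neg (hm hx hy hxy))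
  intro x hx y hy hxy
  simpa using h hx hy hxy

theorem stmt16
    (A K B : ℝ)
    (f : ℝ → ℝ)
    -- `f` is a unimodal Allee map on `[0, M_f]`, i.e. the right endpoint is `M_f = f B`
    (hf : IsUnimodalAlleeMap (f B) A K B f)
    (hMA : A < f (f B)) :
    ∀ x ∈ Ioc A (f B), ∀ n : ℕ, A < f^[n] x := by
  obtain ⟨hA, hAK, hKM, hAB, hBK, hmap, hcont, hmono, hanti, hf0, hfA, hfK, hlt, hgt⟩ := hf
  set M := f B with hM
  have hBM : B < M := hgt B ⟨hAB, hBK⟩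
  have h0B : (0:ℝ) < B := hA.trans hAB
  have monoB : MonotoneOn f (Icc 0 B) :=
    stmt16_mono_ext h0B (hcont.mono (Icc_subset_Icc le_rfl hBM.le)) hmono
  have antiB : AntitoneOn f (Icc B M) := by
    refine stmt16_anti_ext hBM (hcont.mono (Icc_subset_Icc h0B.le le_rfl)) ?_
    exact hanti
  have inv : ∀ x ∈ Ioc A M, f x ∈ Ioc A M := by
    intro x hx
    have hxM : x ≤ M := hx.2
    have hx0 : 0 ≤ x := (hA.trans hx.1).le
    constructor
    · rcases lt_trichotomy x K with hxK | rfl | hKx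
      · exact hx.1.trans (hgt x ⟨hx.1, hxK⟩)
      · rw [hfK]; exact hAK
      · have hBx : B ≤ x := (hBK.trans hKx).le
        have : f M ≤ f x := antiB ⟨hBx, hxM⟩ ⟨hBM.le, le_rfl⟩ hxM
        exact hMA.trans_le this
    · rcases le_total x B with hxB | hBx
      · exact monoB ⟨hx0, hxB⟩ ⟨h0B.le, le_rfl⟩ hxB
      · exact antiB ⟨le_rfl, hBM.le⟩ ⟨hBx, hxM⟩ hBx
  intro x hx n
  have : f^[n] x ∈ Ioc A M := by
    induction n with
    | zero => exact hx
    | succ n ih => rw [Function.iterate_succ_apply']; exact inv _ ih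
  exact this.1
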